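/- Fix a universe u. Suppose Φ assigns to every ω-complete partial order α with least element ⊥ in Type u and to every ω-continuous map f : α →𝒄 α an element Φ α f ∈ α, subject to: (fixpoint) f (Φ α f) = Φ α f for all α and f; and (uniformity) for all such α, β, all f : α →𝒄 α, g : β →𝒄 β, and every ω-continuous map s : α →𝒄 β with s ⊥ = ⊥ and s ∘ f = g ∘ s, one has s (Φ α f) = Φ β g. Then Φ α f = ωSup ⟨n ↦ f^[n] ⊥⟩ for all α and f; in particular the uniform fixpoint operator on pointed ω-complete partial orders is unique and is given by the Kleene formula. -/

import Mathlib

open OmegaCompletePartialOrder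

universe u

/-- The Kleene chain `⊥ ≤ f ⊥ ≤ f (f ⊥) ≤ ⋯` of iterates of `f` starting at `⊥`. -/
def kleeneChain {α : Type u} [OmegaCompletePartialOrder α] [OrderBot α]
    (f : α →𝒄 α) : Chain α where
  toFun n := f^[n] ⊥
  monotone' := monotone_nat_of_le_succ fun n => by
    rw [Function.iterate_succ_apply]
    exact (f.toOrderHom.monotone.iterate n) bot_le

section
variable {α : Type u} [OmegaCompletePartialOrder α] [OrderBot α] (f : α →𝒄 α)

lemma map_kleene_eq (n : ℕ) : ((kleeneChain f).map f.toOrderHom) n = (kleeneChain f) (n + 1) := by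
  show f (f^[n] ⊥) = f^[n+1] ⊥
  rw [Function.iterate_succ_apply']

lemma kleene_fixed : f (ωSup (kleeneChain f)) = ωSup (kleeneChain f) := by
  rw [f.continuous]
  apply le_antisymm
  · apply ωSup_le
    intro n
    exact (le_of_eq (map_kleene_eq f n)).trans (le_ωSup (kleeneChain f) (n + 1))
  · apply ωSup_le
    intro n
    calc (kleeneChain f) n ≤ (kleeneChain f) (n+1) := (kleeneChain f).monotone (Nat.le_succ n)
    _ = ((kleeneChain f).map f.toOrderHom) n := (map_kleene_eq f n).symm
    _ ≤ _ := le_ωSup _ n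

end

/-- Uniqueness of the uniform fixpoint operator on pointed ω-complete partial orders:
any operator `Φ` assigning to every continuous endomap a fixed point, uniformly with
respect to strict continuous maps, is given by the Kleene formula. -/
theorem uniform_fixpoint_unique
    (Φ : ∀ (α : Type u) [OmegaCompletePartialOrder α] [OrderBot α], (α →𝒄 α) → α)
    (hfix : ∀ (α : Type u) [OmegaCompletePartialOrder α] [OrderBot α]
      (f : α →𝒄 α), f (Φ α f) = Φ α f)
    (hunif : ∀ (α β : Type u)
      [OmegaCompletePartialOrder α] [OrderBot α]
      [OmegaCompletePartialOrder β] [OrderBot β]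
      (f : α →𝒄 α) (g : β →𝒄 β) (s : α →𝒄 β),
      s ⊥ = ⊥ → ⇑s ∘ ⇑f = ⇑g ∘ ⇑s → s (Φ α f) = Φ β g)
    (α : Type u) [OmegaCompletePartialOrder α] [OrderBot α] (f : α →𝒄 α) :
    Φ α f = ωSup (kleeneChain f) := by
  set σ := ωSup (kleeneChain f) with hσ
  -- the subtype of elements below the Kleene fixed point
  let p : α → Prop := fun x => x ≤ σ
  have hp : ∀ c : Chain α, (∀ i ∈ c, p i) → p (ωSup c) := by
    intro c hc
    apply ωSup_le
    intro i
    exact hc (c i) ⟨i, rfl⟩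
  letI : OmegaCompletePartialOrder (Subtype p) := OmegaCompletePartialOrder.subtype p hp
  letI : OrderBot (Subtype p) :=
    { bot := ⟨⊥, bot_le⟩
      bot_le := fun x => (bot_le : (⊥ : α) ≤ x.val) }
  -- restriction of f to the subtype
  have hmem : ∀ x : Subtype p, p (f x.val) := by
    intro x
    calc f x.val ≤ f σ := f.monotone x.2
    _ = σ := kleene_fixed f
  let g : Subtype p →𝒄 Subtype p :=
    { toFun := fun x => ⟨f x.val, hmem x⟩
      monotone' := fun a b h => f.monotone h
      map_ωSup' := fun c => by
        apply Subtype.ext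
        show f (ωSup (c.map (OrderHom.Subtype.val p))) = _
        rw [f.continuous]
        exact congrArg ωSup (DFunLike.ext _ _ fun n => rfl) }
  -- the inclusion map
  let s : Subtype p →𝒄 α :=
    { toFun := Subtype.val
      monotone' := fun a b h => h
      map_ωSup' := fun c => rfl }
  have h1 : s (Φ (Subtype p) g) = Φ α f := hunif _ _ g f s rfl rfl
  apply le_antisymm
  · rw [← h1]
    exact (Φ (Subtype p) g).2
  · apply ωSup_le
    intro n
    induction n with
    | zero => exact bot_le
    | succ n ih =>
      show f^[n+1] ⊥ ≤ Φ α f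
      rw [Function.iterate_succ_apply', ← hfix α f]
      exact f.monotone ih
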